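/- Ordering of estimands under nonnegative effects (Supplementary equation (C.3.4)): Assume (A1)–(A3), (A5), (A6), the MSM and (A4.1). Then θ_rsw^(m) = Σ_{j=1}^{m} ψ_j, θ_sw^(m) = Σ_{j=1}^{m} ψ_j + Σ_{j=m+1}^{K} ψ_j q_j, θ^(K) = Σ_{j=1}^{K} ψ_j, and θ_rsw^(m) ≤ θ_sw^(m) ≤ θ^(K). -/

import Mathlib

open MeasureTheory Finset
open scoped Classical

namespace MSMPaper

noncomputable section

variable {Ω : Type*} [MeasurableSpace Ω] {𝓛 : Type*}

/-- Conditional probability `P(E | F) = P(E ∩ F) / P(F)` as a real number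
(junk value `0` when `P F = 0`). -/
def cP (P : Measure Ω) (E F : Set Ω) : ℝ := (P (E ∩ F)).toReal / (P F).toReal

variable {K : ℕ}

/-- Event `Ā(t−1) = b̄` (treatment history up to, not including, time `t`). -/
def Apast (A : Fin K → Ω → Bool) (t : ℕ) (b : Fin K → Bool) : Set Ω :=
  {ω | ∀ k : Fin K, (k : ℕ) < t → A k ω = b k}

/-- Event `L̄(t) = l̄` (covariate history up to and including time `t`). -/
def Lpast (L : Fin K → Ω → 𝓛) (t : ℕ) (l : Fin K → 𝓛) : Set Ω :=
  {ω | ∀ k : Fin K, (k : ℕ) ≤ t → L k ω = l k}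

/-- Event `A̲(s, t−1) = b` (treatment history from time `s` up to, not including, `t`). -/
def Aseg (A : Fin K → Ω → Bool) (s t : ℕ) (b : Fin K → Bool) : Set Ω :=
  {ω | ∀ k : Fin K, s ≤ (k : ℕ) → (k : ℕ) < t → A k ω = b k}

/-- Event `A̲(K−m) = a̲` for a (last-`m`) treatment vector `as`. -/
def EtrV (A : Fin K → Ω → Bool) (m : ℕ) (as : Fin K → Bool) : Set Ω :=
  {ω | ∀ k : Fin K, K - m ≤ (k : ℕ) → A k ω = as k}

/-- Event `A̲(K−m) = a_m` (constant `a` on the last `m` coordinates). -/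
def Etr (A : Fin K → Ω → Bool) (m : ℕ) (a : Bool) : Set Ω :=
  EtrV A m (fun _ => a)

/-- Stabilized weights `W_sw`. -/
def Wsw (P : Measure Ω) (A : Fin K → Ω → Bool) (L : Fin K → Ω → 𝓛) : Ω → ℝ :=
  fun ω => ∏ k : Fin K,
    cP P {ω' | A k ω' = A k ω} (Apast A (k : ℕ) (fun j => A j ω)) /
      cP P {ω' | A k ω' = A k ω}
        (Lpast L (k : ℕ) (fun j => L j ω) ∩ Apast A (k : ℕ) (fun j => A j ω))

/-- Restricted stabilized weights `W_rsw^(m)`. -/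
def Wrsw (P : Measure Ω) (A : Fin K → Ω → Bool) (L : Fin K → Ω → 𝓛) (m : ℕ) : Ω → ℝ :=
  fun ω => ∏ k ∈ Finset.univ.filter (fun k : Fin K => K - m ≤ (k : ℕ)),
    cP P {ω' | A k ω' = A k ω} (Aseg A (K - m) (k : ℕ) (fun j => A j ω)) /
      cP P {ω' | A k ω' = A k ω}
        (Lpast L (k : ℕ) (fun j => L j ω) ∩ Apast A (k : ℕ) (fun j => A j ω))

/-- Partial stabilized weights `W_psw^(m)`. -/
def Wpsw (P : Measure Ω) (A : Fin K → Ω → Bool) (L : Fin K → Ω → 𝓛) (m : ℕ) : Ω → ℝ :=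
  fun ω => ∏ k ∈ Finset.univ.filter (fun k : Fin K => K - m ≤ (k : ℕ)),
    cP P {ω' | A k ω' = A k ω} (Apast A (k : ℕ) (fun j => A j ω)) /
      cP P {ω' | A k ω' = A k ω}
        (Lpast L (k : ℕ) (fun j => L j ω) ∩ Apast A (k : ℕ) (fun j => A j ω))

/-- IP-weighted contrast `θ_W^(m)`. -/
def θW (P : Measure Ω) (A : Fin K → Ω → Bool) (m : ℕ) (W Y : Ω → ℝ) : ℝ :=
  (∫ ω in Etr A m true, W ω * Y ω ∂P) / (∫ ω in Etr A m true, W ω ∂P) -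
    (∫ ω in Etr A m false, W ω * Y ω ∂P) / (∫ ω in Etr A m false, W ω ∂P)

/-- `rev j` is the time index `K − 1 − j`; the paper's coefficient `ψ_{j+1}`
multiplies `a(K − (j+1)) = a(rev j)`. -/
def rev (j : Fin K) : Fin K := ⟨K - 1 - (j : ℕ), by have := j.isLt; omega⟩

/-- `θ^(K) = 𝔼[Y^{1_K}] − 𝔼[Y^{0_K}]`. -/
def θKfull (P : Measure Ω) (Ypot : (Fin K → Bool) → Ω → ℝ) : ℝ :=
  (∫ ω, Ypot (fun _ => true) ω ∂P) - ∫ ω, Ypot (fun _ => false) ω ∂P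

/-- (A1) consistency. -/
def A1ok (A : Fin K → Ω → Bool) (Y : Ω → ℝ) (Ypot : (Fin K → Bool) → Ω → ℝ) : Prop :=
  ∀ (a : Fin K → Bool) (ω : Ω), (∀ k, A k ω = a k) → Y ω = Ypot a ω

/-- (A2) sequential exchangeability. -/
def A2ok (P : Measure Ω) (A : Fin K → Ω → Bool) (L : Fin K → Ω → 𝓛)
    (Ypot : (Fin K → Bool) → Ω → ℝ) : Prop :=
  ∀ (t : Fin K) (a : Fin K → Bool) (B : Set ℝ), MeasurableSet B →
    ∀ (av : Bool) (l : Fin K → 𝓛) (b : Fin K → Bool),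
      0 < P (Lpast L (t : ℕ) l ∩ Apast A (t : ℕ) b) →
      cP P ({ω | Ypot a ω ∈ B} ∩ {ω | A t ω = av}) (Lpast L (t : ℕ) l ∩ Apast A (t : ℕ) b) =
        cP P {ω | Ypot a ω ∈ B} (Lpast L (t : ℕ) l ∩ Apast A (t : ℕ) b) *
          cP P {ω | A t ω = av} (Lpast L (t : ℕ) l ∩ Apast A (t : ℕ) b)

/-- (A3) positivity. -/
def A3ok (P : Measure Ω) (A : Fin K → Ω → Bool) (L : Fin K → Ω → 𝓛) : Prop :=
  ∀ (t : Fin K) (av : Bool) (l : Fin K → 𝓛) (b : Fin K → Bool),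
    0 < P (Lpast L (t : ℕ) l ∩ Apast A (t : ℕ) b) →
    0 < cP P {ω | A t ω = av} (Lpast L (t : ℕ) l ∩ Apast A (t : ℕ) b)

/-- The marginal structural model `𝔼[Y^{ā}] = ψ₀ + Σ_{j=1}^K ψ_j a(K−j)`;
here `ψ j` is the paper's `ψ_{j+1}`, the coefficient of `a(K−1−j)`. -/
def MSMeq (P : Measure Ω) (Ypot : (Fin K → Bool) → Ω → ℝ) (ψ0 : ℝ) (ψ : Fin K → ℝ) : Prop :=
  ∀ a : Fin K → Bool,
    (∫ ω, Ypot a ω ∂P) = ψ0 + ∑ j : Fin K, ψ j * (if a (rev j) = true then 1 else 0)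

/-- (A5) conditional MSM given the past treatment history `Ā(K−m−1)`. -/
def A5ok (P : Measure Ω) (A : Fin K → Ω → Bool) (Ypot : (Fin K → Bool) → Ω → ℝ)
    (m : ℕ) : Prop :=
  ∀ b : Fin K → Bool, 0 < P (Apast A (K - m) b) →
    ∃ (φ0 : ℝ) (φ : Fin K → ℝ), ∀ a : Fin K → Bool,
      (∫ ω in Apast A (K - m) b, Ypot a ω ∂P) / (P (Apast A (K - m) b)).toReal =
        φ0 + ∑ j : Fin K, φ j * (if a (rev j) = true then 1 else 0)

/-- `q_{j+1} = P(A(K−1−j)=1 | A̲(K−m)=1_m) − P(A(K−1−j)=1 | A̲(K−m)=0_m)`. -/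
def qcoef (P : Measure Ω) (A : Fin K → Ω → Bool) (m : ℕ) (j : Fin K) : ℝ :=
  cP P {ω | A (rev j) ω = true} (Etr A m true) -
    cP P {ω | A (rev j) ω = true} (Etr A m false)

end

set_option linter.unusedSectionVars false
section Lemmas

variable {Ω : Type*} [MeasurableSpace Ω] {𝓛 : Type*} [MeasurableSpace 𝓛]
  [Fintype 𝓛] [Nonempty 𝓛] [MeasurableSingletonClass 𝓛]
  {K : ℕ} {A : Fin K → Ω → Bool} {L : Fin K → Ω → 𝓛}

lemma meas_setOf_forall {g : Fin K → Ω → Prop}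
    (h : ∀ k, MeasurableSet {ω | g k ω}) : MeasurableSet {ω | ∀ k, g k ω} := by
  rw [Set.setOf_forall]; exact MeasurableSet.iInter h

lemma meas_eq (hA : ∀ k, Measurable (A k)) (k : Fin K) (b : Bool) :
    MeasurableSet {ω | A k ω = b} := hA k (measurableSet_singleton b)

lemma meas_eqL (hL : ∀ k, Measurable (L k)) (k : Fin K) (x : 𝓛) :
    MeasurableSet {ω | L k ω = x} := hL k (measurableSet_singleton x)

lemma meas_guard {p : Prop} {s : Set Ω} (hs : MeasurableSet s) :
    MeasurableSet {ω | p → ω ∈ s} := by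
  by_cases hp : p
  · simp [hp]; exact hs
  · simp [hp]

lemma meas_Apast (hA : ∀ k, Measurable (A k)) (t : ℕ) (b : Fin K → Bool) :
    MeasurableSet (Apast A t b) :=
  meas_setOf_forall fun k => meas_guard (meas_eq hA k (b k))

lemma meas_Lpast (hL : ∀ k, Measurable (L k)) (t : ℕ) (l : Fin K → 𝓛) :
    MeasurableSet (Lpast L t l) :=
  meas_setOf_forall fun k => meas_guard (meas_eqL hL k (l k))

lemma meas_Aseg (hA : ∀ k, Measurable (A k)) (s t : ℕ) (b : Fin K → Bool) :
    MeasurableSet (Aseg A s t b) := by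
  have : Aseg A s t b = {ω | ∀ k : Fin K, s ≤ (k : ℕ) ∧ (k : ℕ) < t → A k ω = b k} := by
    ext ω; simp [Aseg, and_imp]
  rw [this]
  exact meas_setOf_forall fun k => meas_guard (meas_eq hA k (b k))

lemma meas_EtrV (hA : ∀ k, Measurable (A k)) (m : ℕ) (as : Fin K → Bool) :
    MeasurableSet (EtrV A m as) :=
  meas_setOf_forall fun k => meas_guard (meas_eq hA k (as k))

lemma meas_Etr (hA : ∀ k, Measurable (A k)) (m : ℕ) (a : Bool) :
    MeasurableSet (Etr A m a) := meas_EtrV hA m _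

/-- `Lpast` depends only on coordinates `≤ t`. -/
lemma Lpast_congr {t : ℕ} {l l' : Fin K → 𝓛} (h : ∀ k : Fin K, (k : ℕ) ≤ t → l k = l' k) :
    Lpast L t l = Lpast L t l' := by
  ext ω; constructor <;> intro hω k hk
  · rw [hω k hk]; exact h k hk
  · rw [hω k hk]; exact (h k hk).symm

lemma Apast_congr {t : ℕ} {b b' : Fin K → Bool} (h : ∀ k : Fin K, (k : ℕ) < t → b k = b' k) :
    Apast A t b = Apast A t b' := by
  ext ω; constructor <;> intro hω k hk
  · rw [hω k hk]; exact h k hk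
  · rw [hω k hk]; exact (h k hk).symm

lemma Aseg_congr {s t : ℕ} {b b' : Fin K → Bool}
    (h : ∀ k : Fin K, s ≤ (k : ℕ) → (k : ℕ) < t → b k = b' k) :
    Aseg A s t b = Aseg A s t b' := by
  ext ω; constructor <;> intro hω k hk1 hk2
  · rw [hω k hk1 hk2]; exact h k hk1 hk2
  · rw [hω k hk1 hk2]; exact (h k hk1 hk2).symm

lemma Apast_zero (b : Fin K → Bool) : Apast A 0 b = Set.univ := by
  ext ω; simp [Apast]

lemma Aseg_self (s : ℕ) (b : Fin K → Bool) : Aseg A s s b = Set.univ := by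
  ext ω; simp only [Aseg, Set.mem_setOf_eq, Set.mem_univ, iff_true]
  intro k h1 h2; omega

lemma Apast_succ {s : ℕ} (hs : s < K) (b : Fin K → Bool) :
    Apast A (s + 1) b = {ω | A ⟨s, hs⟩ ω = b ⟨s, hs⟩} ∩ Apast A s b := by
  ext ω
  simp only [Apast, Set.mem_setOf_eq, Set.mem_inter_iff]
  constructor
  · intro h; exact ⟨h ⟨s, hs⟩ (by simp), fun k hk => h k (by omega)⟩
  · rintro ⟨h1, h2⟩ k hk
    rcases Nat.lt_succ_iff_lt_or_eq.1 hk with h | h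
    · exact h2 k h
    · have : k = ⟨s, hs⟩ := Fin.ext h
      subst this; exact h1

lemma Aseg_succ {s t : ℕ} (hst : s ≤ t) (ht : t < K) (b : Fin K → Bool) :
    Aseg A s (t + 1) b = {ω | A ⟨t, ht⟩ ω = b ⟨t, ht⟩} ∩ Aseg A s t b := by
  ext ω
  simp only [Aseg, Set.mem_setOf_eq, Set.mem_inter_iff]
  constructor
  · intro h; exact ⟨h ⟨t, ht⟩ (by simpa using hst) (by simp), fun k hk1 hk2 => h k hk1 (by omega)⟩
  · rintro ⟨h1, h2⟩ k hk1 hk2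
    rcases Nat.lt_succ_iff_lt_or_eq.1 hk2 with h | h
    · exact h2 k hk1 h
    · have : k = ⟨t, ht⟩ := Fin.ext h
      subst this; exact h1

/-- cP basics -/
lemma cP_nonneg (P : Measure Ω) (E F : Set Ω) : 0 ≤ cP P E F := by
  unfold cP; positivity

lemma cP_mul_base (P : Measure Ω) [IsProbabilityMeasure P] {E F : Set Ω} (hF : P F ≠ 0) :
    cP P E F * (P F).toReal = (P (E ∩ F)).toReal := by
  unfold cP
  rw [div_mul_cancel₀]
  exact ENNReal.toReal_ne_zero.2 ⟨hF, measure_ne_top P F⟩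

lemma cP_univ (P : Measure Ω) [IsProbabilityMeasure P] (E : Set Ω) :
    cP P E Set.univ = (P E).toReal := by
  simp [cP]

end Lemmas
section Lemmas2
set_option linter.unusedSectionVars false

variable {Ω : Type*} [MeasurableSpace Ω] {𝓛 : Type*} [MeasurableSpace 𝓛]
  [Fintype 𝓛] [Nonempty 𝓛] [MeasurableSingletonClass 𝓛]
  {K : ℕ} {A : Fin K → Ω → Bool} {L : Fin K → Ω → 𝓛}

/-- Representatives of `L̄(s)`-histories: functions defaulted above `s`. -/
noncomputable def Lreps (𝓛 : Type*) [Fintype 𝓛] [Inhabited 𝓛] (K s : ℕ) : Finset (Fin K → 𝓛) :=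
  Finset.univ.filter (fun l => ∀ k : Fin K, s < (k : ℕ) → l k = default)

lemma Lreps_disjoint {s : ℕ} [Inhabited 𝓛] {l l' : Fin K → 𝓛}
    (hl : l ∈ Lreps 𝓛 K s) (hl' : l' ∈ Lreps 𝓛 K s) (hne : l ≠ l') :
    Disjoint (Lpast L s l) (Lpast L s l') := by
  rw [Set.disjoint_left]
  intro ω h1 h2
  apply hne
  funext k
  by_cases hk : (k : ℕ) ≤ s
  · rw [← h1 k hk, ← h2 k hk]
  · rw [(Finset.mem_filter.1 hl).2 k (by omega), (Finset.mem_filter.1 hl').2 k (by omega)]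

lemma Lreps_cover [Inhabited 𝓛] (s : ℕ) :
    ⋃ l ∈ Lreps 𝓛 K s, Lpast L s l = (Set.univ : Set Ω) := by
  ext ω
  simp only [Set.mem_iUnion, Set.mem_univ, iff_true]
  refine ⟨fun k => if (k : ℕ) ≤ s then L k ω else default, ?_, ?_⟩
  · simp only [Lreps, Finset.mem_filter, Finset.mem_univ, true_and]
    intro k hk; simp [Nat.not_le.2 hk]
  · intro k hk; simp [hk]

/-- Representatives of treatment histories with fixed tail. -/
noncomputable def Breps (K m : ℕ) (a : Bool) : Finset (Fin K → Bool) :=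
  Finset.univ.filter (fun b => ∀ k : Fin K, K - m ≤ (k : ℕ) → b k = a)

lemma Breps_disjoint {m : ℕ} {a : Bool} {b b' : Fin K → Bool} (hne : b ≠ b') :
    Disjoint (Apast A K b) (Apast A K b') := by
  rw [Set.disjoint_left]
  intro ω h1 h2
  apply hne
  funext k
  rw [← h1 k k.isLt, ← h2 k k.isLt]

lemma Etr_eq_biUnion (m : ℕ) (a : Bool) :
    Etr A m a = ⋃ b ∈ Breps K m a, Apast A K b := by
  ext ω
  simp only [Etr, EtrV, Set.mem_setOf_eq, Set.mem_iUnion]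
  constructor
  · intro h
    refine ⟨fun k => A k ω, ?_, fun k _ => rfl⟩
    simp only [Breps, Finset.mem_filter, Finset.mem_univ, true_and]
    exact h
  · rintro ⟨b, hb, hω⟩ k hk
    rw [hω k k.isLt]
    exact (Finset.mem_filter.1 hb).2 k hk

/-- Chain rule for `Apast`. -/
lemma chain_Apast (P : Measure Ω) [IsProbabilityMeasure P] (b : Fin K → Bool)
    {s : ℕ} (hs : s ≤ K) :
    (P (Apast A s b)).toReal =
      ∏ k ∈ Finset.univ.filter (fun k : Fin K => (k : ℕ) < s),
        cP P {ω | A k ω = b k} (Apast A (k : ℕ) b) := by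
  induction s with
  | zero => simp [Apast_zero]
  | succ n ih =>
    have hn : n < K := hs
    have hfil : Finset.univ.filter (fun k : Fin K => (k : ℕ) < n + 1) =
        insert ⟨n, hn⟩ (Finset.univ.filter (fun k : Fin K => (k : ℕ) < n)) := by
      ext k
      simp only [Finset.mem_filter, Finset.mem_univ, true_and, Finset.mem_insert, Fin.ext_iff]
      omega
    rw [hfil, Finset.prod_insert (by simp), ← ih (by omega), Apast_succ hn]
    by_cases h0 : P (Apast A n b) = 0
    · have h1 : P ({ω | A ⟨n, hn⟩ ω = b ⟨n, hn⟩} ∩ Apast A n b) = 0 :=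
        measure_mono_null Set.inter_subset_right h0
      simp [h1, h0, cP]
    · rw [mul_comm, ← cP_mul_base P h0]
      ring
/-- Chain rule for `Aseg`. -/
lemma chain_Aseg (P : Measure Ω) [IsProbabilityMeasure P] (b : Fin K → Bool)
    {t0 s : ℕ} (ht0 : t0 ≤ s) (hs : s ≤ K) :
    (P (Aseg A t0 s b)).toReal =
      ∏ k ∈ Finset.univ.filter (fun k : Fin K => t0 ≤ (k : ℕ) ∧ (k : ℕ) < s),
        cP P {ω | A k ω = b k} (Aseg A t0 (k : ℕ) b) := by
  induction s with
  | zero =>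
    have : t0 = 0 := by omega
    subst this
    simp [Aseg_self]
  | succ n ih =>
    have hn : n < K := hs
    by_cases hts : t0 ≤ n
    · have hfil : Finset.univ.filter (fun k : Fin K => t0 ≤ (k : ℕ) ∧ (k : ℕ) < n + 1) =
          insert ⟨n, hn⟩ (Finset.univ.filter (fun k : Fin K => t0 ≤ (k : ℕ) ∧ (k : ℕ) < n)) := by
        ext k
        simp only [Finset.mem_filter, Finset.mem_univ, true_and, Finset.mem_insert, Fin.ext_iff]
        omega
      rw [hfil, Finset.prod_insert (by simp), ← ih hts (by omega), Aseg_succ hts hn]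
      by_cases h0 : P (Aseg A t0 n b) = 0
      · have h1 : P ({ω | A ⟨n, hn⟩ ω = b ⟨n, hn⟩} ∩ Aseg A t0 n b) = 0 :=
          measure_mono_null Set.inter_subset_right h0
        simp [h1, h0, cP]
      · rw [mul_comm, ← cP_mul_base P h0]
        ring
    · have ht : t0 = n + 1 := by omega
      subst ht
      have hfil : Finset.univ.filter
          (fun k : Fin K => n + 1 ≤ (k : ℕ) ∧ (k : ℕ) < n + 1) = ∅ := by
        ext k
        simp only [Finset.mem_filter, Finset.mem_univ, true_and, Finset.notMem_empty, iff_false]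
        omega
      rw [hfil]
      simp [Aseg_self]

end Lemmas2
section Lemmas3
set_option linter.unusedSectionVars false
set_option maxHeartbeats 1000000

variable {Ω : Type*} [MeasurableSpace Ω] {𝓛 : Type*} [MeasurableSpace 𝓛]
  [Fintype 𝓛] [Nonempty 𝓛] [MeasurableSingletonClass 𝓛]
  {K : ℕ} {A : Fin K → Ω → Bool} {L : Fin K → Ω → 𝓛}

/-- The denominator factor of the weights. -/
noncomputable def dfac (P : Measure Ω) (A : Fin K → Ω → Bool) (L : Fin K → Ω → 𝓛)
    (k : Fin K) (ω : Ω) : ℝ :=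
  cP P {ω' | A k ω' = A k ω}
    (Lpast L (k : ℕ) (fun j => L j ω) ∩ Apast A (k : ℕ) (fun j => A j ω))

lemma integral_null {S : Set Ω} {P : Measure Ω} (h : P S = 0) (f : Ω → ℝ) :
    ∫ ω in S, f ω ∂P = 0 := by
  rw [Measure.restrict_eq_zero.2 h, integral_zero_measure]

lemma setIntegral_mul_of_eqOn {P : Measure Ω} {S : Set Ω} (hS : MeasurableSet S)
    {g Z : Ω → ℝ} {c : ℝ} (h : ∀ ω ∈ S, g ω = c) :
    ∫ ω in S, g ω * Z ω ∂P = c * ∫ ω in S, Z ω ∂P := by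
  rw [setIntegral_congr_fun hS (g := fun ω => c * Z ω) (fun ω hω => by rw [h ω hω]),
    MeasureTheory.integral_const_mul]

lemma integrableOn_mul_of_eqOn {P : Measure Ω} {S : Set Ω} (hS : MeasurableSet S)
    {g Z : Ω → ℝ} {c : ℝ} (hZi : Integrable Z P) (h : ∀ ω ∈ S, g ω = c) :
    IntegrableOn (fun ω => g ω * Z ω) S P :=
  IntegrableOn.congr_fun (hZi.integrableOn.const_mul c)
    (fun ω hω => by simp [h ω hω]) hS

/-- The independence property needed of the integrand `Z` for peeling at times `≥ t0`. -/
def ZProp (P : Measure Ω) (A : Fin K → Ω → Bool) (L : Fin K → Ω → 𝓛)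
    (Z : Ω → ℝ) (a : Fin K → Bool) : Prop :=
  ∀ (t : Fin K) (l : Fin K → 𝓛) (b : Fin K → Bool),
    0 < P (Lpast L (t : ℕ) l ∩ Apast A (t : ℕ) b) →
    ∫ ω in {ω | A t ω = a t} ∩ (Lpast L (t : ℕ) l ∩ Apast A (t : ℕ) b), Z ω ∂P =
      cP P {ω | A t ω = a t} (Lpast L (t : ℕ) l ∩ Apast A (t : ℕ) b) *
        ∫ ω in Lpast L (t : ℕ) l ∩ Apast A (t : ℕ) b, Z ω ∂P

/-- The constant function 1 satisfies `ZProp`. -/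
lemma ZProp_one (P : Measure Ω) [IsProbabilityMeasure P] (a : Fin K → Bool) :
    ZProp P A L (fun _ => (1 : ℝ)) a := by
  intro t l b hC
  set C := Lpast L (t : ℕ) l ∩ Apast A (t : ℕ) b
  rw [setIntegral_const, setIntegral_const]
  simp only [smul_eq_mul, mul_one]
  exact (cP_mul_base P hC.ne').symm

/-- Key consequence of (A2): potential outcomes satisfy `ZProp`. -/
lemma ZProp_Ypot (P : Measure Ω) [IsProbabilityMeasure P]
    (hA : ∀ k, Measurable (A k)) (hL : ∀ k, Measurable (L k))
    {Ypot : (Fin K → Bool) → Ω → ℝ} (hYpm : ∀ a, Measurable (Ypot a))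
    (hA2 : A2ok P A L Ypot) (aa a : Fin K → Bool) :
    ZProp P A L (Ypot aa) a := by
  intro t l b hC
  set C := Lpast L (t : ℕ) l ∩ Apast A (t : ℕ) b with hCdef
  have hCm : MeasurableSet C := (meas_Lpast hL _ l).inter (meas_Apast hA _ b)
  have hAv : MeasurableSet {ω | A t ω = a t} := meas_eq hA t (a t)
  set r : ℝ := cP P {ω | A t ω = a t} C with hrdef
  have hr0 : 0 ≤ r := cP_nonneg P _ _
  -- measure identity from A2
  have hPC : (P C) ≠ 0 := hC.ne'
  have hPCfin : (P C) ≠ ⊤ := measure_ne_top P C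
  have key : ∀ B : Set ℝ, MeasurableSet B →
      P ((Ypot aa ⁻¹' B) ∩ ({ω | A t ω = a t} ∩ C)) =
        ENNReal.ofReal r * P ((Ypot aa ⁻¹' B) ∩ C) := by
    intro B hB
    have h2 := hA2 t aa B hB (a t) l b hC
    have hPCr : (P C).toReal ≠ 0 := ENNReal.toReal_ne_zero.2 ⟨hPC, hPCfin⟩
    have hmul : (P (({ω | Ypot aa ω ∈ B} ∩ {ω | A t ω = a t}) ∩ C)).toReal =
        r * (P ({ω | Ypot aa ω ∈ B} ∩ C)).toReal := by
      have h3 : cP P ({ω | Ypot aa ω ∈ B} ∩ {ω | A t ω = a t}) C =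
          cP P {ω | Ypot aa ω ∈ B} C * cP P {ω | A t ω = a t} C := h2
      rw [hrdef]
      unfold cP at h3 ⊢
      field_simp at h3
      rw [div_mul_eq_mul_div, eq_div_iff hPCr]
      linear_combination h3
    have hfin1 : P (({ω | Ypot aa ω ∈ B} ∩ {ω | A t ω = a t}) ∩ C) ≠ ⊤ := measure_ne_top _ _
    have hfin2 : P ({ω | Ypot aa ω ∈ B} ∩ C) ≠ ⊤ := measure_ne_top _ _
    have : P (({ω | Ypot aa ω ∈ B} ∩ {ω | A t ω = a t}) ∩ C) =
        ENNReal.ofReal r * P ({ω | Ypot aa ω ∈ B} ∩ C) := by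
      rw [← ENNReal.ofReal_toReal hfin1, hmul, ENNReal.ofReal_mul hr0,
        ENNReal.ofReal_toReal hfin2]
    calc P ((Ypot aa ⁻¹' B) ∩ ({ω | A t ω = a t} ∩ C))
        = P (({ω | Ypot aa ω ∈ B} ∩ {ω | A t ω = a t}) ∩ C) := by
          rw [← Set.inter_assoc]; rfl
      _ = ENNReal.ofReal r * P ({ω | Ypot aa ω ∈ B} ∩ C) := this
      _ = ENNReal.ofReal r * P ((Ypot aa ⁻¹' B) ∩ C) := rfl
  -- measure map equality
  have hmapeq : Measure.map (Ypot aa) (P.restrict ({ω | A t ω = a t} ∩ C)) =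
      ENNReal.ofReal r • Measure.map (Ypot aa) (P.restrict C) := by
    ext B hB
    rw [Measure.map_apply (hYpm aa) hB, Measure.smul_apply,
      Measure.map_apply (hYpm aa) hB, Measure.restrict_apply ((hYpm aa) hB),
      Measure.restrict_apply ((hYpm aa) hB), smul_eq_mul]
    exact key B hB
  have hint1 : ∫ y, y ∂(Measure.map (Ypot aa) (P.restrict ({ω | A t ω = a t} ∩ C))) =
      ∫ ω in {ω | A t ω = a t} ∩ C, Ypot aa ω ∂P :=
    integral_map (hYpm aa).aemeasurable aestronglyMeasurable_id
  have hint2 : ∫ y, y ∂(Measure.map (Ypot aa) (P.restrict C)) =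
      ∫ ω in C, Ypot aa ω ∂P :=
    integral_map (hYpm aa).aemeasurable aestronglyMeasurable_id
  rw [← hint1, hmapeq, integral_smul_measure, ENNReal.toReal_ofReal hr0, hint2, smul_eq_mul]

end Lemmas3
section Peel
set_option linter.unusedSectionVars false
set_option maxHeartbeats 2000000

variable {Ω : Type*} [MeasurableSpace Ω] {𝓛 : Type*} [MeasurableSpace 𝓛]
  [Fintype 𝓛] [Nonempty 𝓛] [MeasurableSingletonClass 𝓛]
  {K : ℕ} {A : Fin K → Ω → Bool} {L : Fin K → Ω → 𝓛}

lemma Lreps_cover_inter [Inhabited 𝓛] (s : ℕ) (X : Set Ω) :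
    ⋃ l ∈ Lreps 𝓛 K s, (Lpast L s l ∩ X) = X := by
  ext ω
  simp only [Set.mem_iUnion, Set.mem_inter_iff, exists_prop]
  constructor
  · rintro ⟨l, _, _, hX⟩; exact hX
  · intro hX
    have := Lreps_cover (L := L) (K := K) (Ω := Ω) s
    have hω : ω ∈ ⋃ l ∈ Lreps 𝓛 K s, Lpast L s l := this ▸ Set.mem_univ ω
    simp only [Set.mem_iUnion, exists_prop] at hω
    obtain ⟨l, hl, hωl⟩ := hω
    exact ⟨l, hl, hωl, hX⟩

lemma peel (P : Measure Ω) [IsProbabilityMeasure P]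
    (hA : ∀ k, Measurable (A k)) (hL : ∀ k, Measurable (L k)) (hA3 : A3ok P A L)
    {Z : Ω → ℝ} (hZi : Integrable Z P) {a : Fin K → Bool} (hZ : ZProp P A L Z a)
    (t0 : ℕ) : ∀ s : ℕ, t0 ≤ s → s ≤ K →
    ∫ ω in Apast A s a,
      (∏ k ∈ Finset.univ.filter (fun k : Fin K => t0 ≤ (k : ℕ) ∧ (k : ℕ) < s),
        (dfac P A L k ω)⁻¹) * Z ω ∂P = ∫ ω in Apast A t0 a, Z ω ∂P := by
  letI : Inhabited 𝓛 := Classical.inhabited_of_nonempty ‹_›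
  have htriv : ∀ s : ℕ, s ≤ t0 →
      (Finset.univ.filter (fun k : Fin K => t0 ≤ (k : ℕ) ∧ (k : ℕ) < s)) = ∅ := by
    intro s hs; ext k
    simp only [Finset.mem_filter, Finset.mem_univ, true_and, Finset.notMem_empty, iff_false]
    omega
  intro s
  induction s with
  | zero =>
    intro h1 _
    have ht0 : t0 = 0 := by omega
    subst ht0
    simp [htriv 0 le_rfl]
  | succ n ih =>
    intro h1 h2
    rcases Nat.lt_or_ge n t0 with hlt | hge
    · -- t0 = n + 1 : trivial case
      have : t0 = n + 1 := by omega
      subst this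
      rw [htriv (n+1) le_rfl]; simp
    · have hsK : n < K := h2
      set t : Fin K := ⟨n, hsK⟩ with htdef
      set Dn := Apast A n a with hDn
      have hDnm : MeasurableSet Dn := meas_Apast hA n a
      have hAtm : MeasurableSet {ω | A t ω = a t} := meas_eq hA t (a t)
      -- pieces
      set C : (Fin K → 𝓛) → Set Ω := fun l => Lpast L n l ∩ Dn with hCdef
      have hCm : ∀ l, MeasurableSet (C l) := fun l => (meas_Lpast hL n l).inter hDnm
      set Gfac : (Fin K → 𝓛) → Fin K → ℝ :=
        fun l k => cP P {ω' | A k ω' = a k} (Lpast L (k : ℕ) l ∩ Apast A (k : ℕ) a)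
        with hGfac
      set G : ℕ → (Fin K → 𝓛) → ℝ :=
        fun s' l => ∏ k ∈ Finset.univ.filter (fun k : Fin K => t0 ≤ (k : ℕ) ∧ (k : ℕ) < s'),
          (Gfac l k)⁻¹ with hG
      -- decomposition of Apast (n+1) a
      have hdecomp : Apast A (n + 1) a =
          ⋃ l ∈ Lreps 𝓛 K n, ({ω | A t ω = a t} ∩ C l) := by
        have h1' : Apast A (n+1) a = {ω | A t ω = a t} ∩ Dn := Apast_succ hsK a
        have h2' : ⋃ l ∈ Lreps 𝓛 K n, ({ω | A t ω = a t} ∩ C l) =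
            {ω | A t ω = a t} ∩ ⋃ l ∈ Lreps 𝓛 K n, C l := by
          rw [Set.inter_iUnion₂]
        rw [h1', h2', hCdef]
        rw [Lreps_cover_inter (L := L) n Dn]
      -- constancy of products on pieces
      have hconst1 : ∀ l ∈ Lreps 𝓛 K n, ∀ ω ∈ {ω | A t ω = a t} ∩ C l,
          (∏ k ∈ Finset.univ.filter (fun k : Fin K => t0 ≤ (k : ℕ) ∧ (k : ℕ) < n + 1),
            (dfac P A L k ω)⁻¹) = G (n+1) l := by
        intro l _ ω hω
        obtain ⟨hωA, hωL, hωD⟩ : A t ω = a t ∧ ω ∈ Lpast L n l ∧ ω ∈ Dn :=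
          ⟨hω.1, hω.2.1, hω.2.2⟩
        have hAa : ∀ k : Fin K, (k : ℕ) ≤ n → A k ω = a k := by
          intro k hk
          rcases Nat.lt_or_ge (k : ℕ) n with h | h
          · exact hωD k h
          · have : k = t := Fin.ext (by simp [htdef]; omega)
            rw [this]; exact hωA
        refine Finset.prod_congr rfl ?_
        intro k hk
        simp only [Finset.mem_filter, Finset.mem_univ, true_and] at hk
        have hkn : (k : ℕ) ≤ n := by omega
        congr 1
        unfold dfac
        have e1 : {ω' | A k ω' = A k ω} = {ω' | A k ω' = a k} := by
          rw [hAa k hkn]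
        have e2 : Lpast L (k : ℕ) (fun j => L j ω) = Lpast L (k : ℕ) l :=
          Lpast_congr (fun j hj => hωL j (by omega))
        have e3 : Apast A (k : ℕ) (fun j => A j ω) = Apast A (k : ℕ) a :=
          Apast_congr (fun j hj => hAa j (by omega))
        rw [e1, e2, e3]
      have hconst2 : ∀ l ∈ Lreps 𝓛 K n, ∀ ω ∈ C l,
          (∏ k ∈ Finset.univ.filter (fun k : Fin K => t0 ≤ (k : ℕ) ∧ (k : ℕ) < n),
            (dfac P A L k ω)⁻¹) = G n l := by
        intro l _ ω hω
        obtain ⟨hωL, hωD⟩ := hω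
        refine Finset.prod_congr rfl ?_
        intro k hk
        simp only [Finset.mem_filter, Finset.mem_univ, true_and] at hk
        have hkn : (k : ℕ) < n := hk.2
        congr 1
        unfold dfac
        have e1 : {ω' | A k ω' = A k ω} = {ω' | A k ω' = a k} := by
          rw [hωD k hkn]
        have e2 : Lpast L (k : ℕ) (fun j => L j ω) = Lpast L (k : ℕ) l :=
          Lpast_congr (fun j hj => hωL j (by omega))
        have e3 : Apast A (k : ℕ) (fun j => A j ω) = Apast A (k : ℕ) a :=
          Apast_congr (fun j hj => hωD j (by omega))
        rw [e1, e2, e3]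
      -- per-piece identity
      have hpiece : ∀ l ∈ Lreps 𝓛 K n,
          ∫ ω in {ω | A t ω = a t} ∩ C l,
            (∏ k ∈ Finset.univ.filter (fun k : Fin K => t0 ≤ (k : ℕ) ∧ (k : ℕ) < n + 1),
              (dfac P A L k ω)⁻¹) * Z ω ∂P =
          ∫ ω in C l,
            (∏ k ∈ Finset.univ.filter (fun k : Fin K => t0 ≤ (k : ℕ) ∧ (k : ℕ) < n),
              (dfac P A L k ω)⁻¹) * Z ω ∂P := by
        intro l hl
        by_cases h0 : P (C l) = 0
        · rw [integral_null (measure_mono_null Set.inter_subset_right h0) _,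
            integral_null h0 _]
        · have hCpos : 0 < P (C l) := lt_of_le_of_ne zero_le (Ne.symm h0)
          have hZt : ∫ ω in {ω | A t ω = a t} ∩ C l, Z ω ∂P =
              Gfac l t * ∫ ω in C l, Z ω ∂P := hZ t l a hCpos
          have hGpos : 0 < Gfac l t := hA3 t (a t) l a hCpos
          rw [setIntegral_mul_of_eqOn (hAtm.inter (hCm l)) (hconst1 l hl),
            setIntegral_mul_of_eqOn (hCm l) (hconst2 l hl), hZt]
          have hsplit : G (n+1) l = (Gfac l t)⁻¹ * G n l := by
            simp only [hG]
            have hfil : Finset.univ.filter (fun k : Fin K => t0 ≤ (k:ℕ) ∧ (k:ℕ) < n + 1) =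
                insert t (Finset.univ.filter (fun k : Fin K => t0 ≤ (k:ℕ) ∧ (k:ℕ) < n)) := by
              ext k
              simp only [Finset.mem_filter, Finset.mem_univ, true_and, Finset.mem_insert,
                htdef, Fin.ext_iff]
              omega
            rw [hfil, Finset.prod_insert (by simp [htdef])]
          rw [hsplit]
          have hne : Gfac l t ≠ 0 := hGpos.ne'
          field_simp
      -- pairwise disjointness of pieces
      have hdisj : (↑(Lreps 𝓛 K n) : Set (Fin K → 𝓛)).Pairwise
          (Function.onFun Disjoint fun l => {ω | A t ω = a t} ∩ C l) := by
        intro l hl l' hl' hne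
        have := Lreps_disjoint (L := L) (Finset.mem_coe.1 hl) (Finset.mem_coe.1 hl') hne
        exact this.mono (Set.inter_subset_right.trans Set.inter_subset_left)
          (Set.inter_subset_right.trans Set.inter_subset_left)
      have hdisj2 : (↑(Lreps 𝓛 K n) : Set (Fin K → 𝓛)).Pairwise (Function.onFun Disjoint C) := by
        intro l hl l' hl' hne
        have := Lreps_disjoint (L := L) (Finset.mem_coe.1 hl) (Finset.mem_coe.1 hl') hne
        exact this.mono Set.inter_subset_left Set.inter_subset_left
      -- put it together
      calc ∫ ω in Apast A (n+1) a,
            (∏ k ∈ Finset.univ.filter (fun k : Fin K => t0 ≤ (k:ℕ) ∧ (k:ℕ) < n + 1),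
              (dfac P A L k ω)⁻¹) * Z ω ∂P
          = ∑ l ∈ Lreps 𝓛 K n, ∫ ω in {ω | A t ω = a t} ∩ C l,
              (∏ k ∈ Finset.univ.filter (fun k : Fin K => t0 ≤ (k:ℕ) ∧ (k:ℕ) < n + 1),
                (dfac P A L k ω)⁻¹) * Z ω ∂P := by
            rw [hdecomp]
            exact integral_biUnion_finset _ (fun l _ => hAtm.inter (hCm l)) hdisj
              (fun l hl => integrableOn_mul_of_eqOn (hAtm.inter (hCm l)) hZi (hconst1 l hl))
        _ = ∑ l ∈ Lreps 𝓛 K n, ∫ ω in C l,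
              (∏ k ∈ Finset.univ.filter (fun k : Fin K => t0 ≤ (k:ℕ) ∧ (k:ℕ) < n),
                (dfac P A L k ω)⁻¹) * Z ω ∂P := Finset.sum_congr rfl hpiece
        _ = ∫ ω in Dn,
              (∏ k ∈ Finset.univ.filter (fun k : Fin K => t0 ≤ (k:ℕ) ∧ (k:ℕ) < n),
                (dfac P A L k ω)⁻¹) * Z ω ∂P := by
            rw [← Lreps_cover_inter (L := L) n Dn]
            exact (integral_biUnion_finset _ (fun l _ => hCm l) hdisj2
              (fun l hl => integrableOn_mul_of_eqOn (hCm l) hZi (hconst2 l hl))).symm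
        _ = ∫ ω in Apast A t0 a, Z ω ∂P := ih hge (by omega)

end Peel
section Pieces
set_option linter.unusedSectionVars false
set_option maxHeartbeats 2000000

variable {Ω : Type*} [MeasurableSpace Ω] {𝓛 : Type*} [MeasurableSpace 𝓛]
  [Fintype 𝓛] [Nonempty 𝓛] [MeasurableSingletonClass 𝓛]
  {K : ℕ} {A : Fin K → Ω → Bool} {L : Fin K → Ω → 𝓛}

lemma filter_lt_K : Finset.univ.filter (fun k : Fin K => (k : ℕ) < K) = Finset.univ := by
  ext k; simp [k.isLt]

lemma filter_all_K :
    Finset.univ.filter (fun k : Fin K => 0 ≤ (k : ℕ) ∧ (k : ℕ) < K) = Finset.univ := by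
  ext k; simp [k.isLt]

lemma filter_seg_K (m : ℕ) :
    Finset.univ.filter (fun k : Fin K => K - m ≤ (k : ℕ) ∧ (k : ℕ) < K) =
      Finset.univ.filter (fun k : Fin K => K - m ≤ (k : ℕ)) := by
  ext k; simp [k.isLt]

lemma Aseg_eq_Etr {m : ℕ} {a : Bool} {b : Fin K → Bool} (hb : b ∈ Breps K m a) :
    Aseg A (K - m) K b = Etr A m a := by
  ext ω
  simp only [Aseg, Etr, EtrV, Set.mem_setOf_eq]
  constructor
  · intro h k hk
    rw [← (Finset.mem_filter.1 hb).2 k hk]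
    exact h k hk k.isLt
  · intro h k hk _
    rw [(Finset.mem_filter.1 hb).2 k hk]
    exact h k hk

lemma Wsw_piece (P : Measure Ω) [IsProbabilityMeasure P]
    (hA : ∀ k, Measurable (A k)) (hL : ∀ k, Measurable (L k)) (hA3 : A3ok P A L)
    (b : Fin K → Bool) {Z : Ω → ℝ} (hZi : Integrable Z P) (hZ : ZProp P A L Z b) :
    ∫ ω in Apast A K b, Wsw P A L ω * Z ω ∂P =
      (P (Apast A K b)).toReal * ∫ ω, Z ω ∂P := by
  have hstep : ∀ ω ∈ Apast A K b, Wsw P A L ω * Z ω =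
      (P (Apast A K b)).toReal *
        ((∏ k ∈ Finset.univ.filter (fun k : Fin K => 0 ≤ (k : ℕ) ∧ (k : ℕ) < K),
          (dfac P A L k ω)⁻¹) * Z ω) := by
    intro ω hω
    have hbω : ∀ k : Fin K, A k ω = b k := fun k => hω k k.isLt
    have hW : Wsw P A L ω =
        (∏ k : Fin K, cP P {ω' | A k ω' = b k} (Apast A (k : ℕ) b)) *
          ∏ k : Fin K, (dfac P A L k ω)⁻¹ := by
      unfold Wsw
      rw [← Finset.prod_mul_distrib]
      refine Finset.prod_congr rfl ?_
      intro k _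
      rw [div_eq_mul_inv]
      congr 2
      · rw [hbω k]
      · rw [Apast_congr (fun j _ => hbω j)]
    have hN : (∏ k : Fin K, cP P {ω' | A k ω' = b k} (Apast A (k : ℕ) b)) =
        (P (Apast A K b)).toReal := by
      rw [chain_Apast P b (le_refl K), filter_lt_K]
    rw [hW, hN, filter_all_K]
    ring
  rw [setIntegral_congr_fun (meas_Apast hA K b) hstep, MeasureTheory.integral_const_mul,
    peel P hA hL hA3 hZi hZ 0 K (by omega) le_rfl, Apast_zero, Measure.restrict_univ]

lemma Wrsw_piece (P : Measure Ω) [IsProbabilityMeasure P]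
    (hA : ∀ k, Measurable (A k)) (hL : ∀ k, Measurable (L k)) (hA3 : A3ok P A L)
    {m : ℕ} (hmK : m ≤ K) {a : Bool} {b : Fin K → Bool} (hb : b ∈ Breps K m a)
    {Z : Ω → ℝ} (hZi : Integrable Z P) (hZ : ZProp P A L Z b) :
    ∫ ω in Apast A K b, Wrsw P A L m ω * Z ω ∂P =
      (P (Etr A m a)).toReal * ∫ ω in Apast A (K - m) b, Z ω ∂P := by
  have hstep : ∀ ω ∈ Apast A K b, Wrsw P A L m ω * Z ω =
      (P (Etr A m a)).toReal *
        ((∏ k ∈ Finset.univ.filter (fun k : Fin K => K - m ≤ (k : ℕ) ∧ (k : ℕ) < K),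
          (dfac P A L k ω)⁻¹) * Z ω) := by
    intro ω hω
    have hbω : ∀ k : Fin K, A k ω = b k := fun k => hω k k.isLt
    have hW : Wrsw P A L m ω =
        (∏ k ∈ Finset.univ.filter (fun k : Fin K => K - m ≤ (k : ℕ)),
          cP P {ω' | A k ω' = b k} (Aseg A (K - m) (k : ℕ) b)) *
          ∏ k ∈ Finset.univ.filter (fun k : Fin K => K - m ≤ (k : ℕ)),
            (dfac P A L k ω)⁻¹ := by
      unfold Wrsw
      rw [← Finset.prod_mul_distrib]
      refine Finset.prod_congr rfl ?_
      intro k _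
      rw [div_eq_mul_inv]
      congr 2
      · rw [hbω k]
      · rw [Aseg_congr (fun j _ _ => hbω j)]
    have hN : (∏ k ∈ Finset.univ.filter (fun k : Fin K => K - m ≤ (k : ℕ)),
        cP P {ω' | A k ω' = b k} (Aseg A (K - m) (k : ℕ) b)) =
        (P (Etr A m a)).toReal := by
      rw [← filter_seg_K m, ← chain_Aseg P b (by omega) (le_refl K), Aseg_eq_Etr hb]
    rw [hW, hN, filter_seg_K m]
    ring
  rw [setIntegral_congr_fun (meas_Apast hA K b) hstep, MeasureTheory.integral_const_mul,
    peel P hA hL hA3 hZi hZ (K - m) K (by omega) le_rfl]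

end Pieces
section Sums
set_option linter.unusedSectionVars false
set_option maxHeartbeats 2000000

variable {Ω : Type*} [MeasurableSpace Ω] {𝓛 : Type*} [MeasurableSpace 𝓛]
  [Fintype 𝓛] [Nonempty 𝓛] [MeasurableSingletonClass 𝓛]
  {K : ℕ} {A : Fin K → Ω → Bool} {L : Fin K → Ω → 𝓛}

/-- A function of the (finite) realized history, times an integrable function,
is integrable. -/
lemma hist_integrableOn (P : Measure Ω)
    (hA : ∀ k, Measurable (A k)) (hL : ∀ k, Measurable (L k)) {W : Ω → ℝ}
    (F : (Fin K → 𝓛) → (Fin K → Bool) → ℝ)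
    (hWF : ∀ ω, W ω = F (fun j => L j ω) (fun j => A j ω))
    {Z : Ω → ℝ} (hZi : Integrable Z P) (S : Set Ω) :
    IntegrableOn (fun ω => W ω * Z ω) S P := by
  have hmh : Measurable (fun ω => ((fun j => L j ω, fun j => A j ω) :
      (Fin K → 𝓛) × (Fin K → Bool))) :=
    (measurable_pi_lambda _ hL).prodMk (measurable_pi_lambda _ hA)
  have hFm : Measurable (fun p : (Fin K → 𝓛) × (Fin K → Bool) => F p.1 p.2) :=
    measurable_of_countable _
  have hWm : Measurable W := by
    have : W = (fun p : (Fin K → 𝓛) × (Fin K → Bool) => F p.1 p.2) ∘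
        (fun ω => (fun j => L j ω, fun j => A j ω)) := by
      funext ω; exact hWF ω
    rw [this]
    exact hFm.comp hmh
  have hbd : ∃ C, ∀ ω, ‖W ω‖ ≤ C := by
    classical
    set T := Finset.image (fun p : (Fin K → 𝓛) × (Fin K → Bool) => ‖F p.1 p.2‖)
      Finset.univ with hT
    have hTne : T.Nonempty := ⟨_, Finset.mem_image.2 ⟨Classical.arbitrary _, Finset.mem_univ _, rfl⟩⟩
    refine ⟨T.max' hTne, fun ω => ?_⟩
    rw [hWF ω]
    exact Finset.le_max' T ‖F (fun j => L j ω) (fun j => A j ω)‖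
      (Finset.mem_image.2 ⟨((fun j => L j ω), (fun j => A j ω)), Finset.mem_univ _, rfl⟩)
  obtain ⟨C, hC⟩ := hbd
  exact (hZi.bdd_mul hWm.aestronglyMeasurable (c := C) (Filter.Eventually.of_forall hC)).integrableOn

noncomputable def FswF (P : Measure Ω) (A : Fin K → Ω → Bool) (L : Fin K → Ω → 𝓛) :
    (Fin K → 𝓛) → (Fin K → Bool) → ℝ := fun l b => ∏ k : Fin K,
  cP P {ω' | A k ω' = b k} (Apast A (k : ℕ) b) /
    cP P {ω' | A k ω' = b k} (Lpast L (k : ℕ) l ∩ Apast A (k : ℕ) b)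

noncomputable def FrswF (P : Measure Ω) (A : Fin K → Ω → Bool) (L : Fin K → Ω → 𝓛) (m : ℕ) :
    (Fin K → 𝓛) → (Fin K → Bool) → ℝ :=
  fun l b => ∏ k ∈ Finset.univ.filter (fun k : Fin K => K - m ≤ (k : ℕ)),
    cP P {ω' | A k ω' = b k} (Aseg A (K - m) (k : ℕ) b) /
      cP P {ω' | A k ω' = b k} (Lpast L (k : ℕ) l ∩ Apast A (k : ℕ) b)

lemma Wsw_hist (P : Measure Ω) :
    ∀ ω, Wsw P A L ω = FswF P A L (fun j => L j ω) (fun j => A j ω) := fun ω => rfl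

lemma Wrsw_hist (P : Measure Ω) (m : ℕ) :
    ∀ ω, Wrsw P A L m ω = FrswF P A L m (fun j => L j ω) (fun j => A j ω) := fun ω => rfl

/-- sum of history probabilities over `Breps` equals the probability of `Etr`. -/
lemma sum_Breps_prob (P : Measure Ω) [IsProbabilityMeasure P]
    (hA : ∀ k, Measurable (A k)) (m : ℕ) (a : Bool) :
    ∑ b ∈ Breps K m a, (P (Apast A K b)).toReal = (P (Etr A m a)).toReal := by
  rw [Etr_eq_biUnion (A := A) m a, measure_biUnion_finset (s := Breps K m a)
    (f := fun b => Apast A K b)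
    (fun b hb b' hb' hne => Breps_disjoint (A := A) (m := m) (a := a) hne)
    (fun b _ => meas_Apast hA K b), ENNReal.toReal_sum (fun b _ => measure_ne_top P _)]

/-- The early-history events partition `Ω`. -/
lemma Breps_early_disjoint {m : ℕ} {a : Bool} {b b' : Fin K → Bool}
    (hb : b ∈ Breps K m a) (hb' : b' ∈ Breps K m a) (hne : b ≠ b') :
    Disjoint (Apast A (K - m) b) (Apast A (K - m) b') := by
  rw [Set.disjoint_left]
  intro ω h1 h2
  apply hne
  funext k
  by_cases hk : (k : ℕ) < K - m
  · rw [← h1 k hk, ← h2 k hk]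
  · rw [(Finset.mem_filter.1 hb).2 k (by omega), (Finset.mem_filter.1 hb').2 k (by omega)]

lemma Breps_early_cover (m : ℕ) (a : Bool) :
    ⋃ b ∈ Breps K m a, Apast A (K - m) b = (Set.univ : Set Ω) := by
  ext ω
  simp only [Set.mem_iUnion, Set.mem_univ, iff_true, exists_prop]
  refine ⟨fun k => if K - m ≤ (k : ℕ) then a else A k ω, ?_, ?_⟩
  · simp only [Breps, Finset.mem_filter, Finset.mem_univ, true_and]
    intro k hk; simp [hk]
  · intro k hk
    show A k ω = if K - m ≤ (k : ℕ) then a else A k ω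
    rw [if_neg (by omega : ¬ K - m ≤ (k : ℕ))]

lemma sum_Breps_early_prob (P : Measure Ω) [IsProbabilityMeasure P]
    (hA : ∀ k, Measurable (A k)) (m : ℕ) (a : Bool) :
    ∑ b ∈ Breps K m a, (P (Apast A (K - m) b)).toReal = 1 := by
  have h := measure_biUnion_finset (μ := P) (s := Breps K m a)
    (f := fun b => Apast A (K - m) b)
    (fun b hb b' hb' hne => Breps_early_disjoint (A := A) hb hb' hne)
    (fun b _ => meas_Apast hA (K - m) b)
  rw [Breps_early_cover (A := A) m a] at h
  have := congrArg ENNReal.toReal h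
  rw [measure_univ, ENNReal.toReal_sum (fun b _ => measure_ne_top P _)] at this
  simpa using this.symm

/-- Decompose an integral of an integrable function over all of `Ω`
along the early-history partition. -/
lemma integral_eq_sum_Breps_early (P : Measure Ω) [IsProbabilityMeasure P]
    (hA : ∀ k, Measurable (A k)) (m : ℕ) (a : Bool) {f : Ω → ℝ} (hf : Integrable f P) :
    ∫ ω, f ω ∂P = ∑ b ∈ Breps K m a, ∫ ω in Apast A (K - m) b, f ω ∂P := by
  rw [← integral_biUnion_finset _ (fun b _ => meas_Apast hA (K - m) b)
    (fun b hb b' hb' hne => Breps_early_disjoint (A := A) hb hb' hne)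
    (fun b _ => hf.integrableOn), Breps_early_cover (A := A) m a,
    Measure.restrict_univ]

end Sums
section Parts
set_option linter.unusedSectionVars false
set_option maxHeartbeats 2000000

variable {Ω : Type*} [MeasurableSpace Ω] {𝓛 : Type*} [MeasurableSpace 𝓛]
  [Fintype 𝓛] [Nonempty 𝓛] [MeasurableSingletonClass 𝓛]
  {K : ℕ} {A : Fin K → Ω → Bool} {L : Fin K → Ω → 𝓛}

variable (P : Measure Ω) [IsProbabilityMeasure P]
  (hA : ∀ k, Measurable (A k)) (hL : ∀ k, Measurable (L k))
  {Y : Ω → ℝ} {Ypot : (Fin K → Bool) → Ω → ℝ}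
  (hYpm : ∀ a, Measurable (Ypot a)) (hYpi : ∀ a, Integrable (Ypot a) P)
  (hA1 : A1ok A Y Ypot) (hA2 : A2ok P A L Ypot) (hA3 : A3ok P A L)

include hA hL hYpm hYpi hA1 hA2 hA3 in
lemma sw_num (m : ℕ) (a : Bool) :
    ∫ ω in Etr A m a, Wsw P A L ω * Y ω ∂P =
      ∑ b ∈ Breps K m a, (P (Apast A K b)).toReal * ∫ ω, Ypot b ω ∂P := by
  rw [Etr_eq_biUnion (A := A) m a]
  rw [integral_biUnion_finset _ (fun b _ => meas_Apast hA K b)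
    (fun b hb b' hb' hne => Breps_disjoint (A := A) (m := m) (a := a) hne)
    (fun b _ => by
      refine IntegrableOn.congr_fun
        (hist_integrableOn P hA hL (FswF P A L) (Wsw_hist (A := A) (L := L) P) (hYpi b) _)
        (fun ω hω => ?_) (meas_Apast hA K b)
      show _ * Ypot b ω = _ * Y ω
      rw [← hA1 b ω (fun k => hω k k.isLt)])]
  refine Finset.sum_congr rfl (fun b _ => ?_)
  rw [setIntegral_congr_fun (meas_Apast hA K b)
    (fun ω hω => by
      show Wsw P A L ω * Y ω = Wsw P A L ω * Ypot b ω
      rw [hA1 b ω (fun k => hω k k.isLt)] :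
      Set.EqOn (fun ω => Wsw P A L ω * Y ω) (fun ω => Wsw P A L ω * Ypot b ω) _)]
  exact Wsw_piece P hA hL hA3 b (hYpi b) (ZProp_Ypot P hA hL hYpm hA2 b b)

include hA hL hA3 in
lemma sw_den (m : ℕ) (a : Bool) :
    ∫ ω in Etr A m a, Wsw P A L ω ∂P = (P (Etr A m a)).toReal := by
  have key : ∫ ω in Etr A m a, Wsw P A L ω ∂P =
      ∑ b ∈ Breps K m a, (P (Apast A K b)).toReal := by
    rw [Etr_eq_biUnion (A := A) m a]
    rw [integral_biUnion_finset _ (fun b _ => meas_Apast hA K b)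
      (fun b hb b' hb' hne => Breps_disjoint (A := A) (m := m) (a := a) hne)
      (fun b _ => by
        refine IntegrableOn.congr_fun
          (hist_integrableOn P hA hL (FswF P A L) (Wsw_hist (A := A) (L := L) P)
            (integrable_const (1 : ℝ)) _)
          (fun ω hω => by simp) (meas_Apast hA K b))]
    refine Finset.sum_congr rfl (fun b _ => ?_)
    have h1 : ∫ ω in Apast A K b, Wsw P A L ω ∂P =
        ∫ ω in Apast A K b, Wsw P A L ω * (fun _ => (1 : ℝ)) ω ∂P := by
      simp
    rw [h1, Wsw_piece P hA hL hA3 b (integrable_const 1) (ZProp_one P b)]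
    simp
  rw [key, sum_Breps_prob (A := A) P hA m a]

include hA hL hYpm hYpi hA1 hA2 hA3 in
lemma rsw_num {m : ℕ} (hmK : m ≤ K) (a : Bool) :
    ∫ ω in Etr A m a, Wrsw P A L m ω * Y ω ∂P =
      (P (Etr A m a)).toReal *
        ∑ b ∈ Breps K m a, ∫ ω in Apast A (K - m) b, Ypot b ω ∂P := by
  conv_lhs => rw [Etr_eq_biUnion (A := A) m a]
  rw [integral_biUnion_finset _ (fun b _ => meas_Apast hA K b)
    (fun b hb b' hb' hne => Breps_disjoint (A := A) (m := m) (a := a) hne)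
    (fun b _ => by
      refine IntegrableOn.congr_fun
        (hist_integrableOn P hA hL (FrswF P A L m) (Wrsw_hist (A := A) (L := L) P m) (hYpi b) _)
        (fun ω hω => ?_) (meas_Apast hA K b)
      show _ * Ypot b ω = _ * Y ω
      rw [← hA1 b ω (fun k => hω k k.isLt)])]
  rw [Finset.mul_sum]
  refine Finset.sum_congr rfl (fun b hb => ?_)
  rw [setIntegral_congr_fun (meas_Apast hA K b)
    (fun ω hω => by
      show Wrsw P A L m ω * Y ω = Wrsw P A L m ω * Ypot b ω
      rw [hA1 b ω (fun k => hω k k.isLt)] :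
      Set.EqOn (fun ω => Wrsw P A L m ω * Y ω) (fun ω => Wrsw P A L m ω * Ypot b ω) _)]
  exact Wrsw_piece P hA hL hA3 hmK hb (hYpi b) (ZProp_Ypot P hA hL hYpm hA2 b b)

include hA hL hA3 in
lemma rsw_den {m : ℕ} (hmK : m ≤ K) (a : Bool) :
    ∫ ω in Etr A m a, Wrsw P A L m ω ∂P = (P (Etr A m a)).toReal := by
  rw [Etr_eq_biUnion (A := A) m a]
  rw [integral_biUnion_finset _ (fun b _ => meas_Apast hA K b)
    (fun b hb b' hb' hne => Breps_disjoint (A := A) (m := m) (a := a) hne)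
    (fun b _ => by
      refine IntegrableOn.congr_fun
        (hist_integrableOn P hA hL (FrswF P A L m) (Wrsw_hist (A := A) (L := L) P m)
          (integrable_const (1 : ℝ)) _)
        (fun ω hω => by simp) (meas_Apast hA K b))]
  have hterm : ∀ b ∈ Breps K m a, ∫ ω in Apast A K b, Wrsw P A L m ω ∂P =
      (P (Etr A m a)).toReal * (P (Apast A (K - m) b)).toReal := by
    intro b hb
    have h1 : ∫ ω in Apast A K b, Wrsw P A L m ω ∂P =
        ∫ ω in Apast A K b, Wrsw P A L m ω * (fun _ => (1 : ℝ)) ω ∂P := by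
      simp
    rw [h1, Wrsw_piece P hA hL hA3 hmK hb (integrable_const 1) (ZProp_one P b)]
    simp [measureReal_def]
  rw [Finset.sum_congr rfl hterm, ← Finset.mul_sum,
    sum_Breps_early_prob (A := A) P hA m a, mul_one]
  congr 1
  rw [Etr_eq_biUnion (A := A) m a]

end Parts
section Values
set_option linter.unusedSectionVars false
set_option maxHeartbeats 2000000

variable {Ω : Type*} [MeasurableSpace Ω] {𝓛 : Type*} [MeasurableSpace 𝓛]
  [Fintype 𝓛] [Nonempty 𝓛] [MeasurableSingletonClass 𝓛]
  {K : ℕ} {A : Fin K → Ω → Bool} {L : Fin K → Ω → 𝓛}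

lemma rev_val (j : Fin K) : ((rev j : Fin K) : ℕ) = K - 1 - (j : ℕ) := rfl

lemma rev_ge {m : ℕ} (hmK : m ≤ K) (j : Fin K) (hj : (j : ℕ) < m) :
    K - m ≤ ((rev j : Fin K) : ℕ) := by
  rw [rev_val]; have := j.isLt; omega

lemma rev_lt {m : ℕ} (hm1 : 1 ≤ m) (j : Fin K) (hj : m ≤ (j : ℕ)) :
    ((rev j : Fin K) : ℕ) < K - m := by
  rw [rev_val]; have := j.isLt; omega

lemma rev_inj {j j' : Fin K} (h : rev j = rev j') : j = j' := by
  have h1 : ((rev j : Fin K) : ℕ) = ((rev j' : Fin K) : ℕ) := by rw [h]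
  rw [rev_val, rev_val] at h1
  have := j.isLt; have := j'.isLt
  exact Fin.ext (by omega)

lemma Breps_tail {m : ℕ} {a : Bool} {b : Fin K → Bool} (hb : b ∈ Breps K m a)
    {k : Fin K} (hk : K - m ≤ (k : ℕ)) : b k = a := (Finset.mem_filter.1 hb).2 k hk

lemma sum_Breps_ind (P : Measure Ω) [IsProbabilityMeasure P]
    (hA : ∀ k, Measurable (A k)) (m : ℕ) (a : Bool) (j : Fin K) :
    ∑ b ∈ Breps K m a, (P (Apast A K b)).toReal * (if b (rev j) = true then (1:ℝ) else 0) =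
      (P ({ω | A (rev j) ω = true} ∩ Etr A m a)).toReal := by
  simp only [mul_ite, mul_one, mul_zero]
  rw [← Finset.sum_filter]
  have hset : {ω | A (rev j) ω = true} ∩ Etr A m a =
      ⋃ b ∈ (Breps K m a).filter (fun b => b (rev j) = true), Apast A K b := by
    ext ω
    simp only [Set.mem_inter_iff, Set.mem_setOf_eq, Set.mem_iUnion, exists_prop,
      Finset.mem_filter]
    constructor
    · rintro ⟨hj, hE⟩
      refine ⟨fun k => A k ω, ⟨?_, hj⟩, fun k _ => rfl⟩
      simp only [Breps, Finset.mem_filter, Finset.mem_univ, true_and]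
      exact hE
    · rintro ⟨b, ⟨hb, hbj⟩, hω⟩
      refine ⟨by rw [hω (rev j) (rev j).isLt]; exact hbj, fun k hk => ?_⟩
      rw [hω k k.isLt]
      exact Breps_tail hb hk
  rw [hset, measure_biUnion_finset (s := (Breps K m a).filter (fun b => b (rev j) = true))
    (f := fun b => Apast A K b)
    (fun b hb b' hb' hne => Breps_disjoint (A := A) (m := m) (a := a) hne)
    (fun b _ => meas_Apast hA K b), ENNReal.toReal_sum (fun b _ => measure_ne_top P _)]

variable (P : Measure Ω) [IsProbabilityMeasure P]
  (hA : ∀ k, Measurable (A k)) (hL : ∀ k, Measurable (L k))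
  {Y : Ω → ℝ} {Ypot : (Fin K → Bool) → Ω → ℝ}
  (hYpm : ∀ a, Measurable (Ypot a)) (hYpi : ∀ a, Integrable (Ypot a) P)
  (hA1 : A1ok A Y Ypot) (hA2 : A2ok P A L Ypot) (hA3 : A3ok P A L)

include hA hL hYpm hYpi hA1 hA2 hA3 in
lemma sw_value {m : ℕ} (hm1 : 1 ≤ m) (hmK : m ≤ K)
    (hpos1 : 0 < P (Etr A m true)) (hpos0 : 0 < P (Etr A m false))
    (ψ0 : ℝ) (ψ : Fin K → ℝ) (hMSM : MSMeq P Ypot ψ0 ψ) :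
    θW P A m (Wsw P A L) Y =
      (∑ j ∈ Finset.univ.filter (fun j : Fin K => (j : ℕ) < m), ψ j) +
        (∑ j ∈ Finset.univ.filter (fun j : Fin K => m ≤ (j : ℕ)), ψ j * qcoef P A m j) := by
  have hpe : ∀ a : Bool, 0 < (P (Etr A m a)).toReal := by
    intro a
    cases a
    · exact ENNReal.toReal_pos hpos0.ne' (measure_ne_top P _)
    · exact ENNReal.toReal_pos hpos1.ne' (measure_ne_top P _)
  -- numerator expansion
  have hnum : ∀ a : Bool, ∫ ω in Etr A m a, Wsw P A L ω * Y ω ∂P =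
      ψ0 * (P (Etr A m a)).toReal +
        ((∑ j ∈ Finset.univ.filter (fun j : Fin K => (j : ℕ) < m),
          ψ j * (if a = true then (1:ℝ) else 0)) * (P (Etr A m a)).toReal +
        ∑ j ∈ Finset.univ.filter (fun j : Fin K => m ≤ (j : ℕ)),
          ψ j * (P ({ω | A (rev j) ω = true} ∩ Etr A m a)).toReal) := by
    intro a
    rw [sw_num P hA hL hYpm hYpi hA1 hA2 hA3 m a]
    have hexp : ∀ b ∈ Breps K m a, (P (Apast A K b)).toReal * ∫ ω, Ypot b ω ∂P =
        (P (Apast A K b)).toReal * ψ0 +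
          ∑ j : Fin K, ψ j * ((P (Apast A K b)).toReal *
            (if b (rev j) = true then (1:ℝ) else 0)) := by
      intro b _
      rw [hMSM b, mul_add, Finset.mul_sum]
      congr 1
      refine Finset.sum_congr rfl (fun j _ => ?_)
      ring
    rw [Finset.sum_congr rfl hexp, Finset.sum_add_distrib, ← Finset.sum_mul,
      sum_Breps_prob (A := A) P hA m a, Finset.sum_comm]
    have hj : ∀ j : Fin K, ∑ b ∈ Breps K m a, ψ j * ((P (Apast A K b)).toReal *
        (if b (rev j) = true then (1:ℝ) else 0)) =
        ψ j * ∑ b ∈ Breps K m a, (P (Apast A K b)).toReal *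
          (if b (rev j) = true then (1:ℝ) else 0) := by
      intro j; rw [Finset.mul_sum]
    rw [Finset.sum_congr rfl (fun j _ => hj j)]
    rw [← Finset.sum_filter_add_sum_filter_not Finset.univ (fun j : Fin K => (j : ℕ) < m)]
    have hlo : ∀ j ∈ Finset.univ.filter (fun j : Fin K => (j : ℕ) < m),
        ψ j * ∑ b ∈ Breps K m a, (P (Apast A K b)).toReal *
          (if b (rev j) = true then (1:ℝ) else 0) =
        (ψ j * (if a = true then (1:ℝ) else 0)) * (P (Etr A m a)).toReal := by
      intro j hj'
      have hjm : (j : ℕ) < m := (Finset.mem_filter.1 hj').2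
      have hb : ∀ b ∈ Breps K m a, (if b (rev j) = true then (1:ℝ) else 0) =
          (if a = true then (1:ℝ) else 0) := by
        intro b hb
        rw [Breps_tail hb (rev_ge hmK j hjm)]
      have : ∑ b ∈ Breps K m a, (P (Apast A K b)).toReal *
          (if b (rev j) = true then (1:ℝ) else 0) =
          (∑ b ∈ Breps K m a, (P (Apast A K b)).toReal) * (if a = true then (1:ℝ) else 0) := by
        rw [Finset.sum_mul]
        exact Finset.sum_congr rfl (fun b hbb => by rw [hb b hbb])
      rw [this, sum_Breps_prob (A := A) P hA m a]
      ring
    have hhi : ∀ j ∈ Finset.univ.filter (fun j : Fin K => ¬ (j : ℕ) < m),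
        ψ j * ∑ b ∈ Breps K m a, (P (Apast A K b)).toReal *
          (if b (rev j) = true then (1:ℝ) else 0) =
        ψ j * (P ({ω | A (rev j) ω = true} ∩ Etr A m a)).toReal := by
      intro j _
      rw [sum_Breps_ind (A := A) P hA m a j]
    rw [Finset.sum_congr rfl hlo, Finset.sum_congr rfl hhi, ← Finset.sum_mul]
    have : Finset.univ.filter (fun j : Fin K => ¬ (j : ℕ) < m) =
        Finset.univ.filter (fun j : Fin K => m ≤ (j : ℕ)) := by
      ext j; simp [Nat.not_lt]
    rw [this]
    ring
  -- assemble
  unfold θW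
  rw [hnum true, hnum false, sw_den P hA hL hA3 m true, sw_den P hA hL hA3 m false]
  have e1 : ∀ a : Bool, (ψ0 * (P (Etr A m a)).toReal +
      ((∑ j ∈ Finset.univ.filter (fun j : Fin K => (j : ℕ) < m),
        ψ j * (if a = true then (1:ℝ) else 0)) * (P (Etr A m a)).toReal +
      ∑ j ∈ Finset.univ.filter (fun j : Fin K => m ≤ (j : ℕ)),
        ψ j * (P ({ω | A (rev j) ω = true} ∩ Etr A m a)).toReal)) / (P (Etr A m a)).toReal =
      ψ0 + ((∑ j ∈ Finset.univ.filter (fun j : Fin K => (j : ℕ) < m),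
        ψ j * (if a = true then (1:ℝ) else 0)) +
      ∑ j ∈ Finset.univ.filter (fun j : Fin K => m ≤ (j : ℕ)),
        ψ j * cP P {ω | A (rev j) ω = true} (Etr A m a)) := by
    intro a
    rw [add_div, add_div, mul_div_cancel_right₀ _ (hpe a).ne',
      mul_div_cancel_right₀ _ (hpe a).ne', Finset.sum_div]
    congr 2
    refine Finset.sum_congr rfl (fun j _ => ?_)
    rw [mul_div_assoc]
    rfl
  rw [e1 true, e1 false]
  simp only [if_pos rfl, if_neg (by simp : ¬ (false = true)), mul_one, mul_zero,
    Finset.sum_const_zero, if_true]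
  unfold qcoef
  rw [Finset.sum_congr rfl (fun (j : Fin K) (_ : j ∈ Finset.univ.filter
      (fun j : Fin K => m ≤ (j : ℕ))) => mul_sub (ψ j)
      (cP P {ω | A (rev j) ω = true} (Etr A m true))
      (cP P {ω | A (rev j) ω = true} (Etr A m false))), Finset.sum_sub_distrib]
  ring

end Values
section RswValue
set_option linter.unusedSectionVars false
set_option maxHeartbeats 2000000

variable {Ω : Type*} [MeasurableSpace Ω] {𝓛 : Type*} [MeasurableSpace 𝓛]
  [Fintype 𝓛] [Nonempty 𝓛] [MeasurableSingletonClass 𝓛]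
  {K : ℕ} {A : Fin K → Ω → Bool} {L : Fin K → Ω → 𝓛}

variable (P : Measure Ω) [IsProbabilityMeasure P]
  (hA : ∀ k, Measurable (A k)) (hL : ∀ k, Measurable (L k))
  {Y : Ω → ℝ} {Ypot : (Fin K → Bool) → Ω → ℝ}
  (hYpm : ∀ a, Measurable (Ypot a)) (hYpi : ∀ a, Integrable (Ypot a) P)
  (hA1 : A1ok A Y Ypot) (hA2 : A2ok P A L Ypot) (hA3 : A3ok P A L)

include hA hL hYpm hYpi hA1 hA2 hA3 in
lemma rsw_value {m : ℕ} (hm1 : 1 ≤ m) (hmK : m ≤ K)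
    (hpos1 : 0 < P (Etr A m true)) (hpos0 : 0 < P (Etr A m false))
    (ψ0 : ℝ) (ψ : Fin K → ℝ) (hMSM : MSMeq P Ypot ψ0 ψ) (hA5 : A5ok P A Ypot m) :
    θW P A m (Wrsw P A L m) Y =
      ∑ j ∈ Finset.univ.filter (fun j : Fin K => (j : ℕ) < m), ψ j := by
  have hpe : ∀ a : Bool, 0 < (P (Etr A m a)).toReal := by
    intro a
    cases a
    · exact ENNReal.toReal_pos hpos0.ne' (measure_ne_top P _)
    · exact ENNReal.toReal_pos hpos1.ne' (measure_ne_top P _)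
  have hθ : θW P A m (Wrsw P A L m) Y =
      (∑ b ∈ Breps K m true, ∫ ω in Apast A (K - m) b, Ypot b ω ∂P) -
      (∑ b ∈ Breps K m false, ∫ ω in Apast A (K - m) b, Ypot b ω ∂P) := by
    unfold θW
    rw [rsw_num P hA hL hYpm hYpi hA1 hA2 hA3 hmK true,
      rsw_den P hA hL hA3 hmK true,
      rsw_num P hA hL hYpm hYpi hA1 hA2 hA3 hmK false,
      rsw_den P hA hL hA3 hmK false,
      mul_div_cancel_left₀ _ (hpe true).ne', mul_div_cancel_left₀ _ (hpe false).ne']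
  choose! φ0 φ hφ using hA5
  set p : (Fin K → Bool) → ℝ := fun b => (P (Apast A (K - m) b)).toReal with hp
  have hGint : ∀ (b a' : Fin K → Bool), ∫ ω in Apast A (K - m) b, Ypot a' ω ∂P =
      p b * (φ0 b + ∑ j : Fin K, φ b j * (if a' (rev j) = true then (1:ℝ) else 0)) := by
    intro b a'
    by_cases h : 0 < P (Apast A (K - m) b)
    · have h2 := hφ b h a'
      rw [div_eq_iff (ENNReal.toReal_pos h.ne' (measure_ne_top P _)).ne'] at h2
      rw [h2]; ring
    · have h0 : P (Apast A (K - m) b) = 0 := by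
        by_contra hne
        exact h (lt_of_le_of_ne zero_le (Ne.symm hne))
      rw [integral_null h0]
      simp [hp, h0]
  have hC : ∀ a' : Fin K → Bool,
      ψ0 + ∑ j : Fin K, ψ j * (if a' (rev j) = true then (1:ℝ) else 0) =
      (∑ b ∈ Breps K m false, p b * φ0 b) +
        ∑ j : Fin K, (∑ b ∈ Breps K m false, p b * φ b j) *
          (if a' (rev j) = true then (1:ℝ) else 0) := by
    intro a'
    rw [← hMSM a', integral_eq_sum_Breps_early (A := A) P hA m false (hYpi a'),
      Finset.sum_congr rfl (fun b _ => hGint b a')]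
    simp only [mul_add, Finset.mul_sum]
    rw [Finset.sum_add_distrib, Finset.sum_comm]
    congr 1
    refine Finset.sum_congr rfl (fun j _ => ?_)
    rw [Finset.sum_mul]
    exact Finset.sum_congr rfl (fun b _ => by ring)
  have hpsi : ∀ j : Fin K, ψ j = ∑ b ∈ Breps K m false, p b * φ b j := by
    intro j
    have e0 : ∀ (c : Fin K → ℝ), (∑ j' : Fin K, c j' *
        (if (fun _ : Fin K => false) (rev j') = true then (1:ℝ) else 0)) = 0 := by
      intro c; simp
    have ej : ∀ (c : Fin K → ℝ), (∑ j' : Fin K, c j' *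
        (if (fun k => decide (k = rev j)) (rev j') = true then (1:ℝ) else 0)) = c j := by
      intro c
      rw [Finset.sum_eq_single j]
      · simp
      · intro j' _ hne
        have hne2 : ¬ (rev j' = rev j) := fun h => hne (rev_inj h)
        simp [hne2]
      · simp
    have h0 := hC (fun _ => false)
    rw [e0 ψ, e0 (fun j' => ∑ b ∈ Breps K m false, p b * φ b j')] at h0
    have hj2 := hC (fun k => decide (k = rev j))
    rw [ej ψ, ej (fun j' => ∑ b ∈ Breps K m false, p b * φ b j')] at hj2
    linarith
  -- bijection between Breps true and Breps false
  classical
  set up : (Fin K → Bool) → (Fin K → Bool) :=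
    fun b k => if K - m ≤ (k : ℕ) then true else b k with hup
  set dn : (Fin K → Bool) → (Fin K → Bool) :=
    fun b k => if K - m ≤ (k : ℕ) then false else b k with hdn
  have hbij : (∑ b ∈ Breps K m true, ∫ ω in Apast A (K - m) b, Ypot b ω ∂P) =
      ∑ b ∈ Breps K m false, ∫ ω in Apast A (K - m) b, Ypot (up b) ω ∂P := by
    refine Finset.sum_nbij' dn up ?_ ?_ ?_ ?_ ?_
    · intro b hb
      simp only [Breps, Finset.mem_filter, Finset.mem_univ, true_and, hdn]
      intro k hk; rw [if_pos hk]
    · intro b hb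
      simp only [Breps, Finset.mem_filter, Finset.mem_univ, true_and, hup]
      intro k hk; rw [if_pos hk]
    · intro b hb
      funext k
      simp only [hup, hdn]
      by_cases hk : K - m ≤ (k : ℕ)
      · rw [if_pos hk]; exact (Breps_tail hb hk).symm
      · rw [if_neg hk, if_neg hk]
    · intro b hb
      funext k
      simp only [hup, hdn]
      by_cases hk : K - m ≤ (k : ℕ)
      · rw [if_pos hk]; exact (Breps_tail hb hk).symm
      · rw [if_neg hk, if_neg hk]
    · intro b hb
      have h1 : Apast A (K - m) b = Apast A (K - m) (dn b) := by
        refine Apast_congr (fun k hk => ?_)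
        simp only [hdn]
        rw [if_neg (by omega : ¬ K - m ≤ (k : ℕ))]
      have h2 : up (dn b) = b := by
        funext k
        simp only [hup, hdn]
        by_cases hk : K - m ≤ (k : ℕ)
        · rw [if_pos hk]; exact (Breps_tail hb hk).symm
        · rw [if_neg hk, if_neg hk]
      rw [h1, h2]
  rw [hθ, hbij, ← Finset.sum_sub_distrib]
  have hterm : ∀ b ∈ Breps K m false,
      ((∫ ω in Apast A (K - m) b, Ypot (up b) ω ∂P) -
        ∫ ω in Apast A (K - m) b, Ypot b ω ∂P) =
      p b * ∑ j ∈ Finset.univ.filter (fun j : Fin K => (j : ℕ) < m), φ b j := by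
    intro b hb
    rw [hGint b (up b), hGint b b]
    have hdiff : ∀ j : Fin K,
        φ b j * (if (up b) (rev j) = true then (1:ℝ) else 0) -
          φ b j * (if b (rev j) = true then (1:ℝ) else 0) =
        if (j : ℕ) < m then φ b j else 0 := by
      intro j
      by_cases hj : (j : ℕ) < m
      · have h1 : (up b) (rev j) = true := by
          simp only [hup]; rw [if_pos (rev_ge hmK j hj)]
        have h2 : b (rev j) = false := Breps_tail hb (rev_ge hmK j hj)
        rw [h1, h2, if_pos hj]
        simp
      · have h1 : (up b) (rev j) = b (rev j) := by
          simp only [hup]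
          rw [if_neg (by have := rev_lt (K := K) hm1 j (Nat.le_of_not_lt hj); omega)]
        rw [h1, if_neg hj]
        ring
    have : p b * (φ0 b + ∑ j : Fin K, φ b j * (if (up b) (rev j) = true then (1:ℝ) else 0)) -
        p b * (φ0 b + ∑ j : Fin K, φ b j * (if b (rev j) = true then (1:ℝ) else 0)) =
        p b * ∑ j : Fin K, (φ b j * (if (up b) (rev j) = true then (1:ℝ) else 0) -
          φ b j * (if b (rev j) = true then (1:ℝ) else 0)) := by
      rw [Finset.sum_sub_distrib]
      ring
    rw [this, Finset.sum_congr rfl (fun j _ => hdiff j), ← Finset.sum_filter]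
  rw [Finset.sum_congr rfl hterm]
  have : ∀ b ∈ Breps K m false, p b * ∑ j ∈ Finset.univ.filter
      (fun j : Fin K => (j : ℕ) < m), φ b j =
      ∑ j ∈ Finset.univ.filter (fun j : Fin K => (j : ℕ) < m), p b * φ b j :=
    fun b _ => Finset.mul_sum _ _ _
  rw [Finset.sum_congr rfl this, Finset.sum_comm]
  exact Finset.sum_congr rfl (fun j _ => (hpsi j).symm)

end RswValue

/-- Ordering of estimands under nonnegative effects (equation (C.3.4)). -/
theorem ordering_nonneg
    {Ω : Type*} [MeasurableSpace Ω] {𝓛 : Type*} [MeasurableSpace 𝓛]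
    [Fintype 𝓛] [Nonempty 𝓛] [MeasurableSingletonClass 𝓛]
    (P : Measure Ω) [IsProbabilityMeasure P]
    {K m : ℕ} (hK : 1 ≤ K) (hm1 : 1 ≤ m) (hmK : m ≤ K)
    (A : Fin K → Ω → Bool) (L : Fin K → Ω → 𝓛)
    (hA : ∀ k, Measurable (A k)) (hL : ∀ k, Measurable (L k))
    (Y : Ω → ℝ) (hY : Measurable Y)
    (Ypot : (Fin K → Bool) → Ω → ℝ)
    (hYpm : ∀ a, Measurable (Ypot a)) (hYpi : ∀ a, Integrable (Ypot a) P)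
    (hpos1 : 0 < P (Etr A m true)) (hpos0 : 0 < P (Etr A m false))
    (hA1 : A1ok A Y Ypot) (hA2 : A2ok P A L Ypot) (hA3 : A3ok P A L)
    (ψ0 : ℝ) (ψ : Fin K → ℝ) (hMSM : MSMeq P Ypot ψ0 ψ)
    (hA41 : ∀ j, 0 ≤ ψ j)
    (hA5 : A5ok P A Ypot m)
    (hA6 : ∀ j : Fin K, m ≤ (j : ℕ) → 0 < qcoef P A m j ∧ qcoef P A m j < 1) :
    θW P A m (Wrsw P A L m) Y = (∑ j ∈ Finset.univ.filter (fun j : Fin K => (j : ℕ) < m), ψ j) ∧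
    θW P A m (Wsw P A L) Y = (∑ j ∈ Finset.univ.filter (fun j : Fin K => (j : ℕ) < m), ψ j) +
      (∑ j ∈ Finset.univ.filter (fun j : Fin K => m ≤ (j : ℕ)), ψ j * qcoef P A m j) ∧
    θKfull P Ypot = (∑ j : Fin K, ψ j) ∧
    θW P A m (Wrsw P A L m) Y ≤ θW P A m (Wsw P A L) Y ∧
    θW P A m (Wsw P A L) Y ≤ θKfull P Ypot := by
  have h1 := rsw_value P hA hL hYpm hYpi hA1 hA2 hA3 hm1 hmK hpos1 hpos0 ψ0 ψ hMSM hA5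
  have h2 := sw_value P hA hL hYpm hYpi hA1 hA2 hA3 hm1 hmK hpos1 hpos0 ψ0 ψ hMSM
  have h3 : θKfull P Ypot = ∑ j : Fin K, ψ j := by
    unfold θKfull
    rw [hMSM (fun _ => true), hMSM (fun _ => false)]
    simp
  have hq0 : (0:ℝ) ≤ ∑ j ∈ Finset.univ.filter (fun j : Fin K => m ≤ (j : ℕ)),
      ψ j * qcoef P A m j :=
    Finset.sum_nonneg (fun j hj => mul_nonneg (hA41 j)
      (le_of_lt (hA6 j (Finset.mem_filter.1 hj).2).1))
  have hfsplit : (∑ j : Fin K, ψ j) =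
      (∑ j ∈ Finset.univ.filter (fun j : Fin K => (j : ℕ) < m), ψ j) +
        ∑ j ∈ Finset.univ.filter (fun j : Fin K => m ≤ (j : ℕ)), ψ j := by
    have hfe : Finset.univ.filter (fun j : Fin K => m ≤ (j : ℕ)) =
        Finset.univ.filter (fun j : Fin K => ¬ (j : ℕ) < m) := by
      ext j; simp [Nat.not_lt]
    rw [hfe, Finset.sum_filter_add_sum_filter_not Finset.univ (fun j : Fin K => (j : ℕ) < m) ψ]
  have hqle : (∑ j ∈ Finset.univ.filter (fun j : Fin K => m ≤ (j : ℕ)),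
      ψ j * qcoef P A m j) ≤
      ∑ j ∈ Finset.univ.filter (fun j : Fin K => m ≤ (j : ℕ)), ψ j :=
    Finset.sum_le_sum (fun j hj => mul_le_of_le_one_right (hA41 j)
      (le_of_lt (hA6 j (Finset.mem_filter.1 hj).2).2))
  exact ⟨h1, h2, h3, by rw [h1, h2]; linarith, by rw [h2, h3, hfsplit]; linarith⟩

end MSMPaper
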